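/- Let n > 3 and let G = C_n^+(1,3) be the directed circulant graph on Z/nZ with outgoing arcs 1 and 3 at every vertex. If there exists a primitive pseudo orbit on G of length l with 0 < l ≤ n having exactly N > 0 self-intersections, each a 2-encounter of length zero, and no other self-intersection, then N ≤ (3l − 2n)/4 ≤ l/4 ≤ n/4. -/

import Mathlib

/-!
Directed circulant graphs `C_n^+(a1,a2)` on the vertex set `ZMod n`:
circuits, periodic orbits, and pseudo orbits.

Each vertex `v` has exactly two outgoing bonds `(v, v + a1)` and `(v, v + a2)`
(taken mod `n`), where `0 < a1 < a2 < n`.  A bond is recorded by its origin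
vertex together with its arc (`a1` or `a2`).
-/

/-- The list of bonds (origin vertex, arc) of the walk starting at `v`
following the given list of arcs, on the circulant graph with vertex set `ZMod n`. -/
def bondsFrom (n : ℕ) : ZMod n → List ℕ → List (ZMod n × ℕ)
  | _, [] => []
  | v, a :: as => (v, a) :: bondsFrom n (v + (a : ZMod n)) as

/-- A circuit on the directed circulant graph `C_n^+(a1,a2)`: a starting vertex
together with a nonempty list of arcs, each equal to `a1` or `a2`, whose sum is
`0` modulo `n` (so that the walk returns to its starting vertex). -/
structure Circuit (n a1 a2 : ℕ) where
  start : ZMod n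
  arcs : List ℕ
  arcs_ne : arcs ≠ []
  arcs_mem : ∀ a ∈ arcs, a = a1 ∨ a = a2
  closed : ((arcs.sum : ℕ) : ZMod n) = 0

namespace Circuit

variable {n a1 a2 : ℕ}

/-- The length of a circuit: its number of bonds. -/
def len (c : Circuit n a1 a2) : ℕ := c.arcs.length

/-- The walk sum of a circuit: the sum of the arcs of its bonds. -/
def walkSum (c : Circuit n a1 a2) : ℕ := c.arcs.sum

/-- The list of bonds of a circuit, in order. -/
def bonds (c : Circuit n a1 a2) : List (ZMod n × ℕ) := bondsFrom n c.start c.arcs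

/-- The number of times a circuit passes the vertex `v`: the number of bonds
`(v₀, a)` of the circuit such that the residue of `v - v₀` in `{0, ..., n-1}`
is strictly smaller than the arc `a` (equivalently, than the residue of the
difference of the terminal and origin vertices of the bond). -/
def passCount (c : Circuit n a1 a2) (v : ZMod n) : ℕ :=
  c.bonds.countP fun b => decide ((v - b.1).val < b.2)

/-- The cyclic rotation of a circuit by `k` steps. -/
def rotate (c : Circuit n a1 a2) (k : ℕ) : Circuit n a1 a2 where
  start := c.start + (((c.arcs.take k).sum : ℕ) : ZMod n)
  arcs := c.arcs.rotate k
  arcs_ne := fun h => c.arcs_ne (by rwa [List.rotate_eq_nil_iff] at h)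
  arcs_mem := fun a ha => c.arcs_mem a (List.mem_rotate.mp ha)
  closed := by
    rw [show (c.arcs.rotate k).sum = c.arcs.sum from (c.arcs.rotate_perm k).sum_eq]
    exact c.closed

/-- A circuit is primitive if it does not consist of a strictly shorter circuit
repeated two or more times. -/
def IsPrimitive (c : Circuit n a1 a2) : Prop :=
  ¬ ∃ (w : List ℕ) (r : ℕ), 2 ≤ r ∧ ((w.sum : ℕ) : ZMod n) = 0 ∧
      c.arcs = (List.replicate r w).flatten

end Circuit

/-- Two circuits are related if the second is a cyclic rotation of the first. -/
def RotRel {n a1 a2 : ℕ} (c c' : Circuit n a1 a2) : Prop := ∃ k, c.rotate k = c'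

/-- A periodic orbit: an equivalence class of circuits under cyclic rotation. -/
def PeriodicOrbit (n a1 a2 : ℕ) : Type := Quot (@RotRel n a1 a2)

namespace PeriodicOrbit

variable {n a1 a2 : ℕ}

/-- The periodic orbit of a circuit. -/
def mk (c : Circuit n a1 a2) : PeriodicOrbit n a1 a2 := Quot.mk _ c

/-- The length of a periodic orbit: the length of any representative circuit. -/
def len : PeriodicOrbit n a1 a2 → ℕ :=
  Quot.lift Circuit.len (by
    rintro c c' ⟨k, rfl⟩
    simp [Circuit.len, Circuit.rotate])

/-- The walk sum of a periodic orbit: the walk sum of any representative circuit. -/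
def walkSum : PeriodicOrbit n a1 a2 → ℕ :=
  Quot.lift Circuit.walkSum (by
    rintro c c' ⟨k, rfl⟩
    exact ((c.arcs.rotate_perm k).sum_eq).symm)

/-- A periodic orbit is primitive if it is the class of a primitive circuit. -/
def IsPrimitive (γ : PeriodicOrbit n a1 a2) : Prop :=
  ∃ c : Circuit n a1 a2, mk c = γ ∧ c.IsPrimitive

/-- The multiset of bonds of a periodic orbit (computed from a representative;
this is independent of the representative since rotation permutes the bonds). -/
noncomputable def bonds (γ : PeriodicOrbit n a1 a2) : Multiset (ZMod n × ℕ) :=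
  ((Quot.exists_rep γ).choose.bonds : Multiset (ZMod n × ℕ))

/-- The number of times a periodic orbit passes a vertex (computed from a
representative; this is independent of the representative). -/
noncomputable def passCount (γ : PeriodicOrbit n a1 a2) (v : ZMod n) : ℕ :=
  (Quot.exists_rep γ).choose.passCount v

end PeriodicOrbit

/-- A pseudo orbit: a finite collection of periodic orbits. -/
abbrev PseudoOrbit (n a1 a2 : ℕ) := Multiset (PeriodicOrbit n a1 a2)

namespace PseudoOrbit

variable {n a1 a2 : ℕ}

/-- The length of a pseudo orbit: the sum of the lengths of its members. -/
def len (ps : PseudoOrbit n a1 a2) : ℕ := (ps.map PeriodicOrbit.len).sum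

/-- The walk sum of a pseudo orbit: the sum of the walk sums of its members. -/
def walkSum (ps : PseudoOrbit n a1 a2) : ℕ := (ps.map PeriodicOrbit.walkSum).sum

/-- A pseudo orbit is primitive if its members are primitive and pairwise distinct. -/
def IsPrimitive (ps : PseudoOrbit n a1 a2) : Prop :=
  (∀ γ ∈ ps, PeriodicOrbit.IsPrimitive γ) ∧ ps.Nodup

/-- The multiset of bonds of a pseudo orbit, counted with multiplicity over all
member periodic orbits. -/
noncomputable def bonds (ps : PseudoOrbit n a1 a2) : Multiset (ZMod n × ℕ) :=
  (ps.map PeriodicOrbit.bonds).sum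

/-- The multiset of origin vertices of the bonds of a pseudo orbit, with multiplicity. -/
noncomputable def origins (ps : PseudoOrbit n a1 a2) : Multiset (ZMod n) :=
  ps.bonds.map Prod.fst

/-- A pseudo orbit has no self-intersection if no vertex occurs more than once
among the origin vertices of its bonds. -/
def NoSelfIntersection (ps : PseudoOrbit n a1 a2) : Prop :=
  ∀ v : ZMod n, ps.origins.count v ≤ 1

/-- The number of vertices occurring exactly twice among the origin vertices of
the bonds of a pseudo orbit. -/
noncomputable def twoEncounterCount (ps : PseudoOrbit n a1 a2) : ℕ :=
  (ps.origins.toFinset.filter fun v => ps.origins.count v = 2).card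

/-- The pseudo orbit has exactly `N` self-intersections, each a 2-encounter of
length zero, and no other self-intersection: exactly `N` vertices occur exactly
twice among the origin vertices of its bonds, no vertex occurs more than twice,
and no bond occurs more than once. -/
def OnlyTwoEncounters (ps : PseudoOrbit n a1 a2) (N : ℕ) : Prop :=
  ps.bonds.Nodup ∧ (∀ v : ZMod n, ps.origins.count v ≤ 2) ∧ ps.twoEncounterCount = N

/-- The number of times a pseudo orbit passes a vertex: the total over its members. -/
noncomputable def passCount (ps : PseudoOrbit n a1 a2) (v : ZMod n) : ℕ :=
  (ps.map fun γ => γ.passCount v).sum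

end PseudoOrbit

section Helpers
variable {n : ℕ}

lemma sum_range_ind (hn0 : 0 < n) (v v0 : ZMod n) {a : ℕ} (ha : a ≤ n) :
    (∑ t ∈ Finset.range a, if v0 + (t : ZMod n) = v then 1 else 0)
      = if (v - v0).val < a then 1 else 0 := by
  haveI : NeZero n := ⟨hn0.ne'⟩
  have key : ∀ t ∈ Finset.range a, (if v0 + (t : ZMod n) = v then (1:ℕ) else 0)
      = if t = (v - v0).val then 1 else 0 := by
    intro t ht
    rw [Finset.mem_range] at ht
    have htn : t < n := lt_of_lt_of_le ht ha
    have : (v0 + (t : ZMod n) = v) ↔ (t = (v - v0).val) := by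
      constructor
      · rintro rfl
        rw [eq_comm]
        simp only [add_sub_cancel_left]
        exact ZMod.val_cast_of_lt htn
      · rintro rfl
        rw [ZMod.natCast_val, ZMod.cast_id]
        ring
    simp only [this]
  rw [Finset.sum_congr rfl key, Finset.sum_ite_eq']
  simp [Finset.mem_range]

lemma sum_range_mul_n (hn0 : 0 < n) (v v0 : ZMod n) (m : ℕ) :
    (∑ t ∈ Finset.range (m * n), if v0 + (t : ZMod n) = v then 1 else 0) = m := by
  haveI : NeZero n := ⟨hn0.ne'⟩
  induction m generalizing v0 with
  | zero => simp
  | succ m ih =>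
    have h1 : (m + 1) * n = m * n + n := by ring
    rw [h1, Finset.sum_range_add]
    have h2 : (∑ t ∈ Finset.range n, if v0 + ((m * n + t : ℕ) : ZMod n) = v then (1:ℕ) else 0)
        = ∑ t ∈ Finset.range n, if (v0 + ((m*n : ℕ) : ZMod n)) + (t : ZMod n) = v then (1:ℕ) else 0 := by
      apply Finset.sum_congr rfl
      intro t _
      have : v0 + ((m * n + t : ℕ) : ZMod n) = (v0 + ((m*n : ℕ) : ZMod n)) + (t : ZMod n) := by
        push_cast; ring
      rw [this]
    rw [h2, ih v0, sum_range_ind hn0 v _ le_rfl, if_pos (ZMod.val_lt _)]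
lemma bondsFrom_length : ∀ (as : List ℕ) (v0 : ZMod n),
    (bondsFrom n v0 as).length = as.length
  | [], _ => rfl
  | a :: as, v0 => by
    simp [bondsFrom, bondsFrom_length as]

lemma bondsFrom_snd_mem : ∀ (as : List ℕ) (v0 : ZMod n) (b : ZMod n × ℕ),
    b ∈ bondsFrom n v0 as → b.2 ∈ as
  | [], _, _, h => by simp [bondsFrom] at h
  | a :: as, v0, b, h => by
    simp only [bondsFrom, List.mem_cons] at h
    rcases h with rfl | h
    · exact List.mem_cons_self
    · exact List.mem_cons_of_mem _ (bondsFrom_snd_mem as _ b h)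

lemma countP_bondsFrom (hn0 : 0 < n) (v : ZMod n) :
    ∀ (as : List ℕ) (v0 : ZMod n), (∀ a ∈ as, 0 < a ∧ a ≤ n) →
      (bondsFrom n v0 as).countP (fun b => decide ((v - b.1).val < b.2))
        = ∑ t ∈ Finset.range as.sum, if v0 + (t : ZMod n) = v then 1 else 0
  | [], v0, _ => by simp [bondsFrom]
  | a :: as, v0, h => by
    have ha := h a List.mem_cons_self
    rw [bondsFrom, List.countP_cons, List.sum_cons, Finset.sum_range_add,
      countP_bondsFrom hn0 v as (v0 + a) (fun x hx => h x (List.mem_cons_of_mem _ hx))]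
    have h2 : (∑ t ∈ Finset.range as.sum, if v0 + ((a + t : ℕ) : ZMod n) = v then (1:ℕ) else 0)
        = ∑ t ∈ Finset.range as.sum, if (v0 + (a : ZMod n)) + (t : ZMod n) = v then (1:ℕ) else 0 := by
      apply Finset.sum_congr rfl
      intro t _
      have : v0 + ((a + t : ℕ) : ZMod n) = (v0 + (a : ZMod n)) + (t : ZMod n) := by
        push_cast; ring
      rw [this]
    rw [h2, sum_range_ind hn0 v v0 ha.2]
    simp [decide_eq_true_eq]
    omega
section MainHelpers

open Multiset in
lemma countP_or_disjoint {α : Type*} (p q : α → Prop) [DecidablePred p] [DecidablePred q]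
    (s : Multiset α) (h : ∀ a ∈ s, ¬(p a ∧ q a)) :
    s.countP (fun a => p a ∨ q a) = s.countP p + s.countP q := by
  induction s using Multiset.induction_on with
  | empty => simp
  | cons a s ih =>
    rw [Multiset.countP_cons, Multiset.countP_cons, Multiset.countP_cons,
      ih (fun b hb => h b (Multiset.mem_cons_of_mem hb))]
    have hd := h a (Multiset.mem_cons_self _ _)
    by_cases hp : p a
    · have hq : ¬ q a := fun hq => hd ⟨hp, hq⟩
      simp [hp, hq]
      omega
    · by_cases hq : q a <;> simp [hp, hq] <;> omega

lemma countP_eq_count {α : Type*} [DecidableEq α] (s : Multiset α) (e : α) :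
    s.countP (fun b => b = e) = s.count e := by
  rw [Multiset.countP_congr rfl (fun x _ => by rw [eq_iff_iff, eq_comm])]
  simp [Multiset.count]

lemma countP_msum {α : Type*} (p : α → Prop) [DecidablePred p] (S : Multiset (Multiset α)) :
    Multiset.countP p S.sum = (S.map (Multiset.countP p)).sum := by
  induction S using Multiset.induction_on with
  | empty => simp
  | cons a S ih => simp [Multiset.sum_cons, Multiset.countP_add, ih]

lemma card_msum {α : Type*} (S : Multiset (Multiset α)) :
    Multiset.card S.sum = (S.map Multiset.card).sum := by
  induction S using Multiset.induction_on with
  | empty => simp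
  | cons a S ih => simp [Multiset.sum_cons, ih]

lemma mem_msum {α : Type*} {S : Multiset (Multiset α)} {a : α} :
    a ∈ S.sum ↔ ∃ t ∈ S, a ∈ t := by
  induction S using Multiset.induction_on with
  | empty => simp
  | cons b S ih => simp [Multiset.sum_cons, ih, or_and_right, exists_or]

lemma sum_count_univ {α : Type*} [Fintype α] [DecidableEq α] (s : Multiset α) :
    ∑ v ∈ Finset.univ, s.count v = Multiset.card s := by
  rw [← Multiset.toFinset_sum_count_eq s]
  exact (Finset.sum_subset (Finset.subset_univ _) (fun x _ hx =>
    Multiset.count_eq_zero.mpr (fun h => hx (Multiset.mem_toFinset.mpr h)))).symm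

variable {n : ℕ}

lemma val_lt_three (hn : 3 < n) (u : ZMod n) : u.val < 3 ↔ u = 0 ∨ u = 1 ∨ u = 2 := by
  haveI : NeZero n := ⟨by omega⟩
  haveI : Fact (1 < n) := ⟨by omega⟩
  constructor
  · intro h
    have hu : ((u.val : ℕ) : ZMod n) = u := by rw [ZMod.natCast_val, ZMod.cast_id]
    interval_cases h' : u.val
    · left; rw [← hu]; simp
    · right; left; rw [← hu]; simp
    · right; right; rw [← hu]; simp [Nat.cast_ofNat]
  · rintro (rfl | rfl | rfl)
    · simp [ZMod.val_zero]
    · rw [ZMod.val_one]; omega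
    · have : ((2 : ℕ) : ZMod n) = (2 : ZMod n) := by push_cast; ring
      rw [← this, ZMod.val_cast_of_lt (by omega)]; omega

lemma val_lt_one (hn : 3 < n) (u : ZMod n) : u.val < 1 ↔ u = 0 := by
  rw [Nat.lt_one_iff, ZMod.val_eq_zero]

end MainHelpers
section OrbitLemmas

variable {n : ℕ}

lemma circuit_key (hn : 3 < n) (c : Circuit n 1 3) :
    ∃ m, 0 < m ∧ ∀ v, c.passCount v = m := by
  haveI : NeZero n := ⟨by omega⟩
  have harc : ∀ a ∈ c.arcs, 0 < a ∧ a ≤ n := fun a ha => by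
    rcases c.arcs_mem a ha with rfl | rfl <;> omega
  have hdvd : n ∣ c.arcs.sum := by
    have h := c.closed
    rwa [ZMod.natCast_eq_zero_iff] at h
  obtain ⟨m, hm⟩ := hdvd
  have hpos : 0 < c.arcs.sum := by
    obtain ⟨a, ha⟩ := List.exists_mem_of_ne_nil c.arcs c.arcs_ne
    have h1 := (harc a ha).1
    have h2 : a ≤ c.arcs.sum := List.single_le_sum (fun x hx => Nat.zero_le x) a ha
    omega
  have hm' : 0 < m := by
    rcases Nat.eq_zero_or_pos m with rfl | h
    · omega
    · exact h
  refine ⟨m, hm', fun v => ?_⟩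
  unfold Circuit.passCount Circuit.bonds
  rw [countP_bondsFrom (by omega) v c.arcs c.start harc, hm, mul_comm n m,
    sum_range_mul_n (by omega)]

lemma orbit_key (hn : 3 < n) (γ : PeriodicOrbit n 1 3) :
    ∃ m, 0 < m ∧ ∀ v, γ.passCount v = m :=
  circuit_key hn _

lemma orbit_countP (γ : PeriodicOrbit n 1 3) (v : ZMod n) :
    Multiset.countP (fun b => (v - b.1).val < b.2) γ.bonds = γ.passCount v :=
  Multiset.coe_countP _ _

lemma orbit_card_bonds (γ : PeriodicOrbit n 1 3) :
    Multiset.card γ.bonds = γ.len := by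
  have hmk : Quot.mk _ (Quot.exists_rep γ).choose = γ := (Quot.exists_rep γ).choose_spec
  have h1 : Multiset.card γ.bonds = ((Quot.exists_rep γ).choose).arcs.length := by
    rw [PeriodicOrbit.bonds, Multiset.coe_card]
    exact bondsFrom_length _ _
  have h2 : γ.len = ((Quot.exists_rep γ).choose).len := by
    have h3 : PeriodicOrbit.len (Quot.mk RotRel (Quot.exists_rep γ).choose)
        = ((Quot.exists_rep γ).choose).len := rfl
    rw [hmk] at h3
    exact h3
  rw [h1, h2]
  rfl

lemma orbit_snd_mem (γ : PeriodicOrbit n 1 3) (b : ZMod n × ℕ) (hb : b ∈ γ.bonds) :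
    b.2 = 1 ∨ b.2 = 3 := by
  have hb' : b ∈ (Quot.exists_rep γ).choose.bonds := Multiset.mem_coe.mp hb
  exact (Quot.exists_rep γ).choose.arcs_mem _ (bondsFrom_snd_mem _ _ _ hb')

end OrbitLemmas
/-- For the graph `C_n^+(1,3)` with `n > 3`: if there exists a
primitive pseudo orbit of length `l` with `0 < l ≤ n` having exactly `N > 0`
self-intersections, each a 2-encounter of length zero, and no other
self-intersection, then `N ≤ (3l − 2n)/4 ≤ l/4 ≤ n/4`. -/
theorem two_encounter_bound_one_three
    (n : ℕ) (hn : 3 < n) (l N : ℕ) (hl : 0 < l) (hln : l ≤ n) (hN : 0 < N)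
    (ps : PseudoOrbit n 1 3) (hps : ps.IsPrimitive) (hlen : ps.len = l)
    (henc : ps.OnlyTwoEncounters N) :
    (N : ℚ) ≤ (3 * (l : ℚ) - 2 * (n : ℚ)) / 4 ∧
    (3 * (l : ℚ) - 2 * (n : ℚ)) / 4 ≤ (l : ℚ) / 4 ∧
    (l : ℚ) / 4 ≤ (n : ℚ) / 4 := by
  classical
  haveI : NeZero n := ⟨by omega⟩
  haveI : Fact (1 < n) := ⟨by omega⟩
  obtain ⟨hnodup, hle2, hN2⟩ := henc
  set s : Multiset (ZMod n × ℕ) := ps.bonds with hs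
  have hsnd : ∀ b ∈ s, b.2 = 1 ∨ b.2 = 3 := by
    intro b hb
    rw [hs, PseudoOrbit.bonds, mem_msum] at hb
    obtain ⟨t, ht, hbt⟩ := hb
    obtain ⟨γ, hγ, rfl⟩ := Multiset.mem_map.mp ht
    exact orbit_snd_mem γ b hbt
  set x : ZMod n → ℕ := fun v => s.count (v, 1) with hxdef
  set y : ZMod n → ℕ := fun v => s.count (v, 3) with hydef
  have hx1 : ∀ v, x v ≤ 1 := fun v => Multiset.nodup_iff_count_le_one.mp hnodup _
  have hy1 : ∀ v, y v ≤ 1 := fun v => Multiset.nodup_iff_count_le_one.mp hnodup _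
  have hone : (1 : ZMod n) ≠ 0 := by
    intro h
    have h' : ((1 : ℕ) : ZMod n) = 0 := by exact_mod_cast h
    have := (ZMod.natCast_eq_zero_iff 1 n).mp h'
    have := Nat.le_of_dvd (by omega) this
    omega
  have htwo : (2 : ZMod n) ≠ 0 := by
    intro h
    have h' : ((2 : ℕ) : ZMod n) = 0 := by exact_mod_cast h
    have := (ZMod.natCast_eq_zero_iff 2 n).mp h'
    have := Nat.le_of_dvd (by omega) this
    omega
  have hvm1 : ∀ w : ZMod n, w ≠ w - 1 := by
    intro w h
    exact hone (by linear_combination h)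
  have hvm2 : ∀ w : ZMod n, w ≠ w - 2 := by
    intro w h
    exact htwo (by linear_combination h)
  have hm12 : ∀ w : ZMod n, w - 1 ≠ w - 2 := by
    intro w h
    exact hone (by linear_combination h)
  -- origins count in terms of x and y
  have horig : ∀ v, ps.origins.count v = x v + y v := by
    intro v
    rw [PseudoOrbit.origins, Multiset.count_map, ← Multiset.countP_eq_card_filter]
    have hchar : ∀ b ∈ s, (v = b.1) = (b = (v, 1) ∨ b = (v, 3)) := by
      intro b hb
      rw [eq_iff_iff]
      obtain ⟨w, a⟩ := b
      rcases hsnd _ hb with h3 | h3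
      all_goals simp only at h3; subst h3
      · constructor
        · rintro rfl; left; rfl
        · rintro (h | h)
          · injection h with h1 h2; exact h1.symm
          · injection h with h1 h2; omega
      · constructor
        · rintro rfl; right; rfl
        · rintro (h | h)
          · injection h with h1 h2; omega
          · injection h with h1 h2; exact h1.symm
    rw [Multiset.countP_congr rfl hchar]
    rw [countP_or_disjoint _ _ _ (by
      rintro b hb ⟨rfl, h2⟩; injection h2 with h1 h2'; omega)]
    rw [countP_eq_count, countP_eq_count]
  -- pass counts in terms of x and y
  have hpass : ∀ v, Multiset.countP (fun b => (v - b.1).val < b.2) s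
      = x v + y v + y (v - 1) + y (v - 2) := by
    intro v
    have hchar : ∀ b ∈ s, ((v - b.1).val < b.2)
        = (b = (v, 1) ∨ (b = (v, 3) ∨ (b = (v - 1, 3) ∨ b = (v - 2, 3)))) := by
      intro b hb
      rw [eq_iff_iff]
      obtain ⟨w, a⟩ := b
      rcases hsnd _ hb with h3 | h3
      all_goals simp only at h3; subst h3
      · constructor
        · intro h
          have h0 : w = v :=
            (sub_eq_zero.mp ((val_lt_one hn _).mp h)).symm
          subst h0
          exact Or.inl rfl
        · rintro (h | h | h | h)
          · injection h with h1 h2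
            show (v - w).val < 1
            rw [h1, sub_self, ZMod.val_zero]; omega
          · injection h with h1 h2; omega
          · injection h with h1 h2; omega
          · injection h with h1 h2; omega
      · constructor
        · intro h
          rcases (val_lt_three hn _).mp h with h0 | h0 | h0
          · have hw : w = v := (sub_eq_zero.mp h0).symm
            subst hw; exact Or.inr (Or.inl rfl)
          · have hw : w = v - 1 := by linear_combination -h0
            subst hw; exact Or.inr (Or.inr (Or.inl rfl))
          · have hw : w = v - 2 := by linear_combination -h0
            subst hw; exact Or.inr (Or.inr (Or.inr rfl))
        · rintro (h | h | h | h)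
          · injection h with h1 h2; omega
          · injection h with h1 h2; subst h1
            exact (val_lt_three hn _).mpr (Or.inl (by ring))
          · injection h with h1 h2; subst h1
            exact (val_lt_three hn _).mpr (Or.inr (Or.inl (by ring)))
          · injection h with h1 h2; subst h1
            exact (val_lt_three hn _).mpr (Or.inr (Or.inr (by ring)))
    rw [Multiset.countP_congr rfl hchar]
    rw [countP_or_disjoint _ _ _ (by
      rintro b hb ⟨rfl, (h2 | h2 | h2)⟩ <;> injection h2 with h1 h2' <;> omega)]
    rw [countP_or_disjoint _ _ _ (by
      rintro b hb ⟨rfl, (h2 | h2)⟩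
      · injection h2 with h1 h2'; exact hvm1 v h1
      · injection h2 with h1 h2'; exact hvm2 v h1)]
    rw [countP_or_disjoint _ _ _ (by
      rintro b hb ⟨rfl, h2⟩
      injection h2 with h1 h2'; exact hm12 v h1)]
    rw [countP_eq_count, countP_eq_count, countP_eq_count, countP_eq_count]
    ring
  -- the constant pass count M
  have hMconst : ∃ M, 1 ≤ M ∧ ∀ v, Multiset.countP (fun b => (v - b.1).val < b.2) s = M := by
    have hps0 : ps ≠ 0 := by
      intro h
      rw [h] at hlen
      simp [PseudoOrbit.len] at hlen
      omega
    have hγ : ∀ γ : PeriodicOrbit n 1 3,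
        1 ≤ γ.passCount 0 ∧ ∀ v, γ.passCount v = γ.passCount 0 := by
      intro γ
      obtain ⟨m, hm, hmv⟩ := orbit_key hn γ
      exact ⟨by rw [hmv 0]; exact hm, fun v => by rw [hmv v, hmv 0]⟩
    refine ⟨ps.passCount 0, ?_, ?_⟩
    · obtain ⟨γ, hγm⟩ := Multiset.exists_mem_of_ne_zero hps0
      have h1 : γ.passCount 0 ≤ ps.passCount 0 :=
        Multiset.single_le_sum (fun a _ => Nat.zero_le a) _ (Multiset.mem_map_of_mem _ hγm)
      have h2 := (hγ γ).1
      omega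
    · intro v
      have h1 : Multiset.countP (fun b => (v - b.1).val < b.2) s = ps.passCount v := by
        rw [hs, PseudoOrbit.bonds, countP_msum, Multiset.map_map]
        rfl
      rw [h1]
      show (ps.map fun γ => γ.passCount v).sum = (ps.map fun γ => γ.passCount 0).sum
      exact congrArg Multiset.sum (Multiset.map_congr rfl (fun γ _ => (hγ γ).2 v))
  obtain ⟨M, hM1, hMv⟩ := hMconst
  have hp2 : ∀ v, x v + y v + y (v - 1) + y (v - 2) = M := fun v => by
    rw [← hpass v, hMv v]
  -- cardinality of bonds
  have hcard : Multiset.card s = l := by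
    rw [hs, PseudoOrbit.bonds, card_msum, Multiset.map_map, ← hlen]
    show _ = (ps.map PeriodicOrbit.len).sum
    exact congrArg Multiset.sum (Multiset.map_congr rfl (fun γ _ => orbit_card_bonds γ))
  set k1 : ℕ := ∑ v : ZMod n, x v with hk1
  set k3 : ℕ := ∑ v : ZMod n, y v with hk3
  have hl13 : k1 + k3 = l := by
    rw [hk1, hk3, ← Finset.sum_add_distrib]
    have h1 : ∀ v ∈ Finset.univ, x v + y v = ps.origins.count v := fun v _ => (horig v).symm
    rw [Finset.sum_congr rfl h1, sum_count_univ]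
    rw [PseudoOrbit.origins, Multiset.card_map]
    exact hcard
  have hshift1 : ∑ v : ZMod n, y (v - 1) = k3 :=
    Fintype.sum_bijective _ (Equiv.subRight (1 : ZMod n)).bijective _ _ (fun v => rfl)
  have hshift2 : ∑ v : ZMod n, y (v - 2) = k3 :=
    Fintype.sum_bijective _ (Equiv.subRight (2 : ZMod n)).bijective _ _ (fun v => rfl)
  have hkey : l + k3 + k3 = n * M := by
    have h1 : ∑ v : ZMod n, (x v + y v + y (v - 1) + y (v - 2)) = ∑ _v : ZMod n, M :=
      Finset.sum_congr rfl (fun v _ => hp2 v)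
    rw [Finset.sum_const, Finset.card_univ, ZMod.card, smul_eq_mul] at h1
    have h2 : ∑ v : ZMod n, (x v + y v + y (v - 1) + y (v - 2))
        = k1 + k3 + k3 + k3 := by
      rw [Finset.sum_add_distrib, Finset.sum_add_distrib, Finset.sum_add_distrib,
        hshift1, hshift2, hk1, hk3]
    rw [h2] at h1
    omega
  -- N in terms of x, y
  set T : Finset (ZMod n) := Finset.univ.filter (fun v => x v = 1 ∧ y v = 1) with hT
  have hTcard : T.card = N := by
    rw [← hN2]
    have hset : ps.origins.toFinset.filter (fun v => ps.origins.count v = 2) = T := by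
      ext v
      simp only [Finset.mem_filter, Multiset.mem_toFinset, hT, Finset.mem_univ, true_and]
      constructor
      · rintro ⟨-, h2⟩
        have h3 := horig v
        have h4 := hx1 v
        have h5 := hy1 v
        constructor <;> omega
      · rintro ⟨hxv, hyv⟩
        have h2 : ps.origins.count v = 2 := by rw [horig v]; omega
        exact ⟨Multiset.count_pos.mp (by omega), h2⟩
    rw [PseudoOrbit.twoEncounterCount, hset]
  have hTprop : ∀ v ∈ T, x v = 1 ∧ y v = 1 := by
    intro v hv
    rw [hT, Finset.mem_filter] at hv
    exact hv.2
  have hTne : T.Nonempty := Finset.card_pos.mp (by omega)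
  have hk3l : k3 ≤ l := by omega
  -- M cannot be ≥ 3
  have hMle : M ≤ 2 := by
    by_contra h
    have h3 : 3 ≤ M := by omega
    have hge : 3 * n ≤ n * M := by
      calc 3 * n = n * 3 := by ring
      _ ≤ n * M := Nat.mul_le_mul_left n h3
    have hle' : n * M ≤ 3 * l := by omega
    have hln' : l = n ∧ k3 = l := by omega
    have hk10 : k1 = 0 := by omega
    obtain ⟨v, hv⟩ := hTne
    have hxv := (hTprop v hv).1
    have : x v ≤ k1 := Finset.single_le_sum (fun w _ => Nat.zero_le (x w)) (Finset.mem_univ v)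
    omega
  -- M cannot be 1
  have hMne1 : M ≠ 1 := by
    intro h
    obtain ⟨v, hv⟩ := hTne
    obtain ⟨hxv, hyv⟩ := hTprop v hv
    have := hp2 v
    omega
  have hM2 : M = 2 := by omega
  have hp2' : ∀ v, x v + y v + y (v - 1) + y (v - 2) = 2 := fun v => by rw [hp2 v, hM2]
  have hTy : ∀ v ∈ T, y (v - 1) = 0 ∧ y (v - 2) = 0 := by
    intro v hv
    obtain ⟨hxv, hyv⟩ := hTprop v hv
    have := hp2' v
    omega
  have hTx1 : ∀ v ∈ T, x (v - 1) = 1 := by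
    intro v hv
    have h1 := hp2' (v - 1)
    have e1 : v - 1 - 1 = v - 2 := by ring
    have e2 : v - 1 - 2 = v - 3 := by ring
    rw [e1, e2] at h1
    obtain ⟨hy1', hy2'⟩ := hTy v hv
    have h4 := hx1 (v - 1)
    have h5 := hy1 (v - 3)
    omega
  set U : Finset (ZMod n) := T ∪ T.image (· - (1 : ZMod n)) with hU
  have hdisj : Disjoint T (T.image (· - (1 : ZMod n))) := by
    rw [Finset.disjoint_left]
    rintro w hw hw'
    obtain ⟨v, hv, rfl⟩ := Finset.mem_image.mp hw'
    have h1 := (hTprop _ hw).2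
    have h2 := (hTy v hv).1
    omega
  have hUcard : U.card = N + N := by
    rw [hU, Finset.card_union_of_disjoint hdisj,
      Finset.card_image_of_injective _ sub_left_injective, hTcard]
  have hUx : ∀ w ∈ U, x w = 1 := by
    intro w hw
    rcases Finset.mem_union.mp (hU ▸ hw) with h | h
    · exact (hTprop w h).1
    · obtain ⟨v, hv, rfl⟩ := Finset.mem_image.mp h
      exact hTx1 v hv
  have h2N : N + N ≤ k1 := by
    have hsum : ∑ w ∈ U, x w = N + N := by
      rw [Finset.sum_congr rfl hUx, Finset.sum_const, smul_eq_mul, mul_one, hUcard]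
    have hsub : ∑ w ∈ U, x w ≤ k1 :=
      Finset.sum_le_sum_of_subset (Finset.subset_univ U)
    omega
  have hfin : 4 * N + 2 * n ≤ 3 * l := by
    have h2n : l + k3 + k3 = 2 * n := by rw [hkey, hM2]; ring
    omega
  have hq1 : (4 * N + 2 * n : ℚ) ≤ 3 * l := by exact_mod_cast hfin
  have hq2 : (l : ℚ) ≤ n := Nat.cast_le.mpr hln
  refine ⟨by linarith, by linarith, by linarith⟩
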